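/- Substituting the optimal Y given x into F yields a reduced objective: min_{Y : Σ y_i = y} F(x, Y) = (1/n)‖y − Hx‖₂², where Hx = Σ_j x_j h_j. Hence the alternating minimization problem in (x, Y) over x ∈ [−l,l]^n reduces to minimizing ‖y − Hx‖₂² over the box [−l,l]^n. -/

import Mathlib

open scoped RealInnerProductSpace BigOperators

theorem stmt9 (m n : ℕ) (hn : 1 ≤ n) (h : Fin n → EuclideanSpace ℝ (Fin m))
    (y : EuclideanSpace ℝ (Fin m)) (l : ℝ) (hl : 0 < l) :
    (∀ x : Fin n → ℝ,
      IsLeast {v : ℝ | ∃ Y : Fin n → EuclideanSpace ℝ (Fin m),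
          (∑ i, Y i) = y ∧ v = ∑ i, ‖Y i - x i • h i‖ ^ 2}
        ((1 / n) * ‖y - ∑ j, x j • h j‖ ^ 2)) ∧
    ∀ xs : Fin n → ℝ, (∀ i, xs i ∈ Set.Icc (-l) l) →
      ((∀ x : Fin n → ℝ, (∀ i, x i ∈ Set.Icc (-l) l) →
          (1 / n) * ‖y - ∑ j, xs j • h j‖ ^ 2 ≤ (1 / n) * ‖y - ∑ j, x j • h j‖ ^ 2) ↔
       (∀ x : Fin n → ℝ, (∀ i, x i ∈ Set.Icc (-l) l) →
          ‖y - ∑ j, xs j • h j‖ ^ 2 ≤ ‖y - ∑ j, x j • h j‖ ^ 2)) := by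
  have hn0 : (0:ℝ) < n := by exact_mod_cast hn
  constructor
  · intro x
    set r : EuclideanSpace ℝ (Fin m) := y - ∑ j, x j • h j with hr
    constructor
    · refine ⟨fun i => x i • h i + (n:ℝ)⁻¹ • r, ?_, ?_⟩
      · rw [Finset.sum_add_distrib, Finset.sum_const, Finset.card_univ,
          Fintype.card_fin, hr]
        rw [← Nat.cast_smul_eq_nsmul ℝ, smul_smul, mul_inv_cancel₀ hn0.ne', one_smul]
        abel
      · have : ∀ i : Fin n, ‖(x i • h i + (n:ℝ)⁻¹ • r) - x i • h i‖ ^ 2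
            = (n:ℝ)⁻¹ ^ 2 * ‖r‖ ^ 2 := by
          intro i
          rw [add_sub_cancel_left, norm_smul, mul_pow]
          simp [abs_of_pos (inv_pos.mpr hn0)]
        rw [Finset.sum_congr rfl fun i _ => this i, Finset.sum_const,
          Finset.card_univ, Fintype.card_fin, nsmul_eq_mul]
        field_simp
    · rintro v ⟨Y, hsum, rfl⟩
      have hz : ∑ i, (Y i - x i • h i) = r := by
        rw [Finset.sum_sub_distrib, hsum, hr]
      have h1 : ‖r‖ ^ 2 ≤ (∑ i, ‖Y i - x i • h i‖) ^ 2 := by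
        rw [← hz]
        exact pow_le_pow_left₀ (norm_nonneg _) (norm_sum_le _ _) 2
      have h2 : (∑ i, ‖Y i - x i • h i‖) ^ 2
          ≤ n * ∑ i, ‖Y i - x i • h i‖ ^ 2 := by
        have := sq_sum_le_card_mul_sum_sq (s := Finset.univ)
          (f := fun i => ‖Y i - x i • h i‖)
        simpa using this
      rw [div_mul_eq_mul_div, one_mul, div_le_iff₀ hn0]
      calc ‖r‖ ^ 2 ≤ n * ∑ i, ‖Y i - x i • h i‖ ^ 2 := h1.trans h2
        _ = (∑ i, ‖Y i - x i • h i‖ ^ 2) * n := by ring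
  · intro xs _
    constructor
    · intro H x hx
      have := H x hx
      have hpos : (0:ℝ) < 1 / n := by positivity
      exact le_of_mul_le_mul_left this hpos
    · intro H x hx
      have := H x hx
      have hpos : (0:ℝ) ≤ 1 / n := by positivity
      exact mul_le_mul_of_nonneg_left this hpos
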